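/- Let M^m be a biharmonic hypersurface in a space form N^{m+1}(C) of constant sectional curvature C, so that in particular the tangency condition A(∇H) = −(m/2)H∇H holds. Then at every point, Ric^M(∇H, ∇H) = ((m−1)C − (3/4)m²H²)|∇H|². -/

import Mathlib

open scoped RealInnerProductSpace

theorem ricci_gradH_biharmonic_space_form {V : Type} [NormedAddCommGroup V]
    [InnerProductSpace ℝ V] (m : ℕ) (C H : ℝ) (A : V →ₗ[ℝ] V)
    (Ric : V → V → ℝ) (gradH : V)
    (gauss : ∀ X Y : V,
      (m : ℝ) * C * ⟪X, Y⟫ = Ric X Y + ⟪A X, A Y⟫ - m * H * ⟪A X, Y⟫ + C * ⟪X, Y⟫)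
    (tangency : A gradH = -(((m : ℝ) / 2) * H) • gradH) :
    Ric gradH gradH = (((m : ℝ) - 1) * C - 3 / 4 * (m : ℝ) ^ 2 * H ^ 2) * ‖gradH‖ ^ 2 := by
  have h := gauss gradH gradH
  rw [tangency] at h
  simp [inner_smul_left, inner_smul_right, real_inner_self_eq_norm_sq] at h
  rw [norm_smul, mul_pow, Real.norm_eq_abs, sq_abs] at h
  nlinarith [h]
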